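/- Let τ be a finite type over Ω, let f ∈ Ω_{τ→τ} and x ∈ Ω_τ be hereditarily positive. Then for all countable ordinals α and γ: Iter_α^τ (Iter_γ^τ f) x =hp Iter_{γ·α}^τ f x, where γ·α is ordinal multiplication. -/

import Mathlib

/-!  Framework: finite type structure over Ω = countable ordinals,
     limsup/liminf, transfinite iteration functionals, hereditarily
     positive and hereditarily monotone functionals. -/

noncomputable section
namespace IterOrd

open Ordinal

theorem omega1_pos : (0 : Ordinal) < ω₁ := Ordinal.omega0_pos.trans Ordinal.omega0_lt_omega_one

/-- `Om` is Ω, the set of countable ordinals (ordinals `< ω₁`). -/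
abbrev Om : Type 1 := {o : Ordinal // o < ω₁}

/-- Infimum of a subset of Ω (the minimum for nonempty sets; `0` for `∅`). -/
def infOm (s : Set Om) : Om :=
  ⟨sInf (Subtype.val '' s), by
    rcases (Subtype.val '' s).eq_empty_or_nonempty with h | h
    · rw [h]; simpa using omega1_pos
    · obtain ⟨x, _, he⟩ := csInf_mem h
      exact he ▸ x.2⟩

/-- Supremum of a subset of Ω.  Whenever the supremum of the set exists in Ω
(in particular for every countable subset, by regularity of `ω₁`) this is the
genuine supremum; otherwise it takes a junk value. -/
def supOm (s : Set Om) : Om :=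
  if h : sSup (Subtype.val '' s) < ω₁ then ⟨sSup (Subtype.val '' s), h⟩ else ⟨0, omega1_pos⟩

/-- Finite types over the base type `o` (interpreted as Ω). -/
inductive Ty : Type
  | base : Ty
  | arrow : Ty → Ty → Ty
deriving DecidableEq

/-- The full type structure over Ω: `El base = Ω` and
`El (arrow σ τ)` is the set of all functions `El σ → El τ`. -/
@[reducible] def El : Ty → Type 1
  | .base => Om
  | .arrow σ τ => El σ → El τ

/-- The order on each `El σ`: the ordinal order at base type, pointwise at arrow types. -/
def Le : (σ : Ty) → El σ → El σ → Prop
  | .base => fun x y => x ≤ y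
  | .arrow σ τ => fun f g => ∀ x : El σ, Le τ (f x) (g x)

/-- Suprema, computed pointwise at function types. -/
def supEl : (σ : Ty) → Set (El σ) → El σ
  | .base => supOm
  | .arrow σ τ => fun S (x : El σ) => supEl τ ((fun f : El (.arrow σ τ) => f x) '' S)

/-- Infima, computed pointwise at function types. -/
def infEl : (σ : Ty) → Set (El σ) → El σ
  | .base => infOm
  | .arrow σ τ => fun S (x : El σ) => infEl τ ((fun f : El (.arrow σ τ) => f x) '' S)

/-- `limsup_{ξ→ζ} f ξ = inf_{γ<ζ} sup_{γ≤ξ<ζ} f ξ`. -/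
def limsupEl (σ : Ty) (ζ : Ordinal) (f : ∀ ξ : Ordinal, ξ < ζ → El σ) : El σ :=
  infEl σ {y | ∃ γ, ∃ _ : γ < ζ, y = supEl σ {z | ∃ ξ, ∃ h : ξ < ζ, γ ≤ ξ ∧ z = f ξ h}}

/-- `liminf_{ξ→ζ} f ξ = sup_{γ<ζ} inf_{γ≤ξ<ζ} f ξ`. -/
def liminfEl (σ : Ty) (ζ : Ordinal) (f : ∀ ξ : Ordinal, ξ < ζ → El σ) : El σ :=
  supEl σ {y | ∃ γ, ∃ _ : γ < ζ, y = infEl σ {z | ∃ ξ, ∃ h : ξ < ζ, γ ≤ ξ ∧ z = f ξ h}}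

/-- `limsup` of a ζ-indexed sequence of ordinals. -/
def oLimsup (ζ : Ordinal) (a : Ordinal → Ordinal) : Ordinal :=
  sInf {s | ∃ γ, γ < ζ ∧ s = sSup (a '' {ξ | γ ≤ ξ ∧ ξ < ζ})}

/-- `liminf` of a ζ-indexed sequence of ordinals. -/
def oLiminf (ζ : Ordinal) (a : Ordinal → Ordinal) : Ordinal :=
  sSup {s | ∃ γ, γ < ζ ∧ s = sInf (a '' {ξ | γ ≤ ξ ∧ ξ < ζ})}

/-- The α-iteration functional of type σ:
`Iter 0 f x = x`, `Iter (α+1) f x = f (Iter α f x)`, and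
`Iter μ f x = limsup_{ξ→μ} Iter ξ f x` for limit μ. -/
def Iter (σ : Ty) (α : Ordinal) : (El σ → El σ) → El σ → El σ :=
  Ordinal.limitRecOn (motive := fun _ => (El σ → El σ) → El σ → El σ) α
    (fun _ x => x)
    (fun _ ih f x => f (ih f x))
    (fun μ _ ih f x => limsupEl σ μ (fun ξ h => ih ξ h f x))

/-- The pair (hereditarily positive, ≤hp), defined simultaneously by recursion on the type.
Every element of `Ω` and of `Ω_{ρ→τ}` with `ρ ≠ τ` is h.p., and `≤hp` there is `≤`;
`f : Ω_{τ→τ}` is h.p. iff it preserves h.p., is inflationary on h.p. arguments and is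
monotone (w.r.t. `≤hp`) on h.p. arguments; `f ≤hp f'` on `Ω_{τ→τ}` iff `f x ≤hp f' x`
for every h.p. `x`. -/
def HPaux : (σ : Ty) → (El σ → Prop) × (El σ → El σ → Prop)
  | .base => ⟨fun _ => True, fun x y => x ≤ y⟩
  | .arrow ρ τ =>
      ⟨fun f =>
        if h : ρ = τ then
          (∀ x, (HPaux ρ).1 x → (HPaux τ).1 (f x)) ∧
          (∀ x, (HPaux ρ).1 x → (HPaux τ).2 (cast (congrArg El h) x) (f x)) ∧
          (∀ x y, (HPaux ρ).1 x → (HPaux ρ).1 y → (HPaux ρ).2 x y → (HPaux τ).2 (f x) (f y))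
        else True,
       fun f g =>
        if ρ = τ then ∀ x, (HPaux ρ).1 x → (HPaux τ).2 (f x) (g x)
        else Le (.arrow ρ τ) f g⟩

/-- Hereditarily positive functionals. -/
def Hp (σ : Ty) : El σ → Prop := (HPaux σ).1

/-- The order `≤hp`. -/
def HpLe (σ : Ty) : El σ → El σ → Prop := (HPaux σ).2

/-- `f =hp g` iff `f ≤hp g` and `g ≤hp f`. -/
def HpEq (σ : Ty) (f g : El σ) : Prop := HpLe σ f g ∧ HpLe σ g f

/-- The pair (hereditarily monotone, ≤ on the hereditarily monotone structure),
by recursion on the type.  `f` is hereditarily monotone iff it maps hereditarily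
monotone arguments to hereditarily monotone values, monotonically; the order is
pointwise over hereditarily monotone arguments (i.e. the order of `Ω^mon`). -/
def HMaux : (σ : Ty) → (El σ → Prop) × (El σ → El σ → Prop)
  | .base => ⟨fun _ => True, fun x y => x ≤ y⟩
  | .arrow σ τ =>
      ⟨fun f =>
        (∀ x, (HMaux σ).1 x → (HMaux τ).1 (f x)) ∧
        (∀ x y, (HMaux σ).1 x → (HMaux σ).1 y → (HMaux σ).2 x y → (HMaux τ).2 (f x) (f y)),
       fun f g => ∀ x, (HMaux σ).1 x → (HMaux τ).2 (f x) (g x)⟩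

/-- Hereditarily monotone functionals: the members of the type structure `Ω^mon`. -/
def HM (σ : Ty) : El σ → Prop := (HMaux σ).1

/-- The (pointwise) order of the hereditarily monotone type structure `Ω^mon`. -/
def LeHM (σ : Ty) : El σ → El σ → Prop := (HMaux σ).2

/-- Equality in the hereditarily monotone type structure `Ω^mon`. -/
def EqHM (σ : Ty) (f g : El σ) : Prop := LeHM σ f g ∧ LeHM σ g f

section Base

open Cardinal in
theorem add_lt_omega1 {a b : Ordinal} (ha : a < ω₁) (hb : b < ω₁) : a + b < ω₁ := by
  rw [← ord_aleph, Cardinal.lt_ord, Ordinal.card_add] at *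
  exact Cardinal.add_lt_of_lt (aleph0_le_aleph 1) ha hb

open Cardinal in
theorem mul_lt_omega1 {a b : Ordinal} (ha : a < ω₁) (hb : b < ω₁) : a * b < ω₁ := by
  rw [← ord_aleph, Cardinal.lt_ord, Ordinal.card_mul] at *
  exact Cardinal.mul_lt_of_lt (aleph0_le_aleph 1) ha hb

theorem bddAbove_val (s : Set Om) : BddAbove (Subtype.val '' s) :=
  ⟨ω₁, by rintro x ⟨y, -, rfl⟩; exact y.2.le⟩

open Cardinal in
theorem sSup_val_lt {ζ : Ordinal} (hζ : ζ < ω₁) (b : ∀ ξ : Ordinal, ξ < ζ → Om)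
    {s : Set Om} (hs : ∀ z ∈ s, ∃ ξ, ∃ h : ξ < ζ, z = b ξ h) :
    sSup (Subtype.val '' s) < ω₁ := by
  rcases s.eq_empty_or_nonempty with h | hne
  · rw [h, Set.image_empty, csSup_empty]; exact omega1_pos
  · haveI : Countable ζ.ToType := by
      rw [← Cardinal.mk_le_aleph0_iff, Cardinal.mk_toType]
      have := hζ
      rw [← ord_aleph, Cardinal.lt_ord, ← Cardinal.succ_aleph0, Order.lt_succ_iff] at this
      exact this
    haveI : Nonempty ζ.ToType := by
      rw [Ordinal.nonempty_toType_iff]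
      obtain ⟨z, hz⟩ := hne
      obtain ⟨ξ, hξ, -⟩ := hs z hz
      exact fun h0 => (lt_irrefl (0 : Ordinal)) (lt_of_le_of_lt (zero_le : (0 : Ordinal) ≤ ξ) (h0 ▸ hξ))
    obtain ⟨e, he⟩ := exists_surjective_nat ζ.ToType
    set g : ℕ → Ordinal := fun n =>
      (b ((Ordinal.ToType.mk (o := ζ)).symm (e n)).1 ((Ordinal.ToType.mk (o := ζ)).symm (e n)).2).val
      with hg
    have hsup : ∀ x ∈ Subtype.val '' s, x ≤ iSup g := by
      rintro x ⟨z, hz, rfl⟩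
      obtain ⟨ξ, hξ, rfl⟩ := hs z hz
      obtain ⟨n, hn⟩ := he (Ordinal.ToType.mk (o := ζ) ⟨ξ, hξ⟩)
      have : (b ξ hξ).val = g n := by rw [hg]; simp [hn]
      rw [this]
      exact Ordinal.le_iSup g _
    refine lt_of_le_of_lt (csSup_le (hne.image _) hsup) ?_
    exact Ordinal.iSup_lt_omega_one fun i => (b _ _).2

theorem le_supOm {s : Set Om} (hb : sSup (Subtype.val '' s) < ω₁) {x : Om} (hx : x ∈ s) :
    x ≤ supOm s := by
  rw [supOm, dif_pos hb]
  exact le_csSup (bddAbove_val s) (Set.mem_image_of_mem _ hx)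

theorem supOm_le {s : Set Om} (hne : s.Nonempty) {c : Om} (hc : ∀ x ∈ s, x ≤ c) :
    supOm s ≤ c := by
  rw [supOm]
  split
  · show sSup _ ≤ c.val
    exact csSup_le (hne.image _) (by rintro x ⟨y, hy, rfl⟩; exact hc y hy)
  · exact (zero_le : (0 : Ordinal) ≤ c.val)

theorem infOm_le {s : Set Om} {x : Om} (hx : x ∈ s) : infOm s ≤ x := by
  show sInf (Subtype.val '' s) ≤ x.val
  exact csInf_le (OrderBot.bddBelow _) (Set.mem_image_of_mem _ hx)

theorem exists_infOm_eq {s : Set Om} (hne : s.Nonempty) : ∃ y ∈ s, infOm s = y := by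
  obtain ⟨x, hx, he⟩ := csInf_mem (hne.image Subtype.val)
  exact ⟨x, hx, Subtype.ext he.symm⟩

end Base
section Order

theorem le_refl' : ∀ (σ : Ty) (x : El σ), Le σ x x
  | .base, _ => le_rfl
  | .arrow _ τ, f => fun y => le_refl' τ (f y)

theorem le_trans' : ∀ (σ : Ty) {x y z : El σ}, Le σ x y → Le σ y z → Le σ x z
  | .base, _, _, _, h1, h2 => le_trans h1 h2
  | .arrow _ τ, _, _, _, h1, h2 => fun u => le_trans' τ (h1 u) (h2 u)

theorem hp_base (x : El .base) : Hp .base x := trivial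

theorem hp_of_ne {σ τ : Ty} (h : σ ≠ τ) (f : El (.arrow σ τ)) : Hp (.arrow σ τ) f := by
  show (HPaux (.arrow σ τ)).1 f
  simp only [HPaux]
  rw [dif_neg h]
  trivial

theorem hp_arrow_iff {a : Ty} {f : El (.arrow a a)} :
    Hp (.arrow a a) f ↔
      (∀ x, Hp a x → Hp a (f x)) ∧ (∀ x, Hp a x → HpLe a x (f x)) ∧
      (∀ x y, Hp a x → Hp a y → HpLe a x y → HpLe a (f x) (f y)) := by
  show (HPaux (.arrow a a)).1 f ↔ _
  simp only [HPaux]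
  rw [dif_pos trivial]
  exact Iff.rfl

theorem hpLe_arrow_iff {a : Ty} {f g : El (.arrow a a)} :
    HpLe (.arrow a a) f g ↔ ∀ x, Hp a x → HpLe a (f x) (g x) := by
  show (HPaux (.arrow a a)).2 f g ↔ _
  simp only [HPaux]
  rw [if_pos trivial]
  exact Iff.rfl

theorem hpLe_arrow_ne_iff {σ τ : Ty} (h : σ ≠ τ) {f g : El (.arrow σ τ)} :
    HpLe (.arrow σ τ) f g ↔ Le (.arrow σ τ) f g := by
  show (HPaux (.arrow σ τ)).2 f g ↔ _
  simp only [HPaux]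
  rw [if_neg h]

theorem hpLe_base_iff {x y : El .base} : HpLe .base x y ↔ x ≤ y := Iff.rfl

theorem hpLe_refl : ∀ (σ : Ty) (x : El σ), HpLe σ x x
  | .base, _ => le_rfl
  | .arrow σ τ, f => by
      by_cases h : σ = τ
      · subst h
        exact hpLe_arrow_iff.2 fun y _ => hpLe_refl σ (f y)
      · exact (hpLe_arrow_ne_iff h).2 (le_refl' _ f)

theorem hpLe_trans : ∀ (σ : Ty) {x y z : El σ}, HpLe σ x y → HpLe σ y z → HpLe σ x z
  | .base, _, _, _, h1, h2 => le_trans h1 h2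
  | .arrow σ τ, f, g, k, h1, h2 => by
      by_cases h : σ = τ
      · subst h
        exact hpLe_arrow_iff.2 fun y hy =>
          hpLe_trans σ (hpLe_arrow_iff.1 h1 y hy) (hpLe_arrow_iff.1 h2 y hy)
      · rw [hpLe_arrow_ne_iff h] at *
        exact le_trans' _ h1 h2

theorem hpEq_refl (σ : Ty) (x : El σ) : HpEq σ x x := ⟨hpLe_refl σ x, hpLe_refl σ x⟩

theorem hpEq_symm {σ : Ty} {x y : El σ} (h : HpEq σ x y) : HpEq σ y x := ⟨h.2, h.1⟩

theorem hpEq_trans {σ : Ty} {x y z : El σ} (h1 : HpEq σ x y) (h2 : HpEq σ y z) : HpEq σ x z :=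
  ⟨hpLe_trans σ h1.1 h2.1, hpLe_trans σ h2.2 h1.2⟩

theorem hpEq_of_eq {σ : Ty} {x y : El σ} (h : x = y) : HpEq σ x y := h ▸ hpEq_refl σ x

end Order
section Limsup

theorem image_app {σ τ : Ty} (y : El σ) {ζ γ : Ordinal} (F : ∀ ξ, ξ < ζ → El (.arrow σ τ)) :
    (fun g : El (.arrow σ τ) => g y) '' {z | ∃ ξ, ∃ h : ξ < ζ, γ ≤ ξ ∧ z = F ξ h} =
      {z | ∃ ξ, ∃ h : ξ < ζ, γ ≤ ξ ∧ z = F ξ h y} := by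
  ext u; constructor
  · rintro ⟨g, ⟨ξ, h, hγ, rfl⟩, rfl⟩; exact ⟨ξ, h, hγ, rfl⟩
  · rintro ⟨ξ, h, hγ, rfl⟩; exact ⟨F ξ h, ⟨ξ, h, hγ, rfl⟩, rfl⟩

theorem limsupEl_app {σ τ : Ty} {ζ : Ordinal} (F : ∀ ξ, ξ < ζ → El (.arrow σ τ)) (y : El σ) :
    limsupEl (.arrow σ τ) ζ F y = limsupEl τ ζ (fun ξ h => F ξ h y) := by
  show infEl τ _ = infEl τ _
  congr 1
  ext u
  simp only [Set.mem_image, Set.mem_setOf_eq]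
  constructor
  · rintro ⟨g, ⟨γ, hγ, rfl⟩, rfl⟩
    exact ⟨γ, hγ, by show supEl τ _ = supEl τ _; rw [image_app]⟩
  · rintro ⟨γ, hγ, rfl⟩
    refine ⟨supEl (.arrow σ τ) {z | ∃ ξ, ∃ h : ξ < ζ, γ ≤ ξ ∧ z = F ξ h}, ⟨γ, hγ, rfl⟩, ?_⟩
    show supEl τ _ = supEl τ _
    rw [image_app]

theorem base_bound {ζ : Ordinal} (hζl : Order.IsSuccLimit ζ) (hζ : ζ < ω₁) (b : ∀ ξ, ξ < ζ → Om)
    (hmono : ∀ ξ ξ' (h : ξ < ζ) (h' : ξ' < ζ), ξ ≤ ξ' → b ξ h ≤ b ξ' h')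
    (ξ : Ordinal) (h : ξ < ζ) : b ξ h ≤ limsupEl .base ζ b := by
  have hne : {y | ∃ γ, ∃ _ : γ < ζ, y = supOm {z | ∃ ξ, ∃ h : ξ < ζ, γ ≤ ξ ∧ z = b ξ h}}.Nonempty :=
    ⟨_, 0, hζl.pos, rfl⟩
  have hdef : limsupEl .base ζ b =
      infOm {y | ∃ γ, ∃ _ : γ < ζ, y = supOm {z | ∃ ξ, ∃ h : ξ < ζ, γ ≤ ξ ∧ z = b ξ h}} := rfl
  rw [hdef]
  obtain ⟨y, ⟨γ, hγ, rfl⟩, he⟩ := exists_infOm_eq hne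
  rw [he]
  have hm : max γ ξ < ζ := max_lt hγ h
  refine le_trans (hmono ξ (max γ ξ) h hm (le_max_right _ _)) ?_
  refine le_supOm (sSup_val_lt hζ b ?_) ⟨max γ ξ, hm, le_max_left _ _, rfl⟩
  rintro z ⟨ξ', h', -, rfl⟩
  exact ⟨ξ', h', rfl⟩

theorem base_least {ζ : Ordinal} (hζl : Order.IsSuccLimit ζ) (b : ∀ ξ, ξ < ζ → Om) (c : Om)
    (hc : ∀ ξ h, b ξ h ≤ c) : limsupEl .base ζ b ≤ c := by
  have hdef : limsupEl .base ζ b =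
      infOm {y | ∃ γ, ∃ _ : γ < ζ, y = supOm {z | ∃ ξ, ∃ h : ξ < ζ, γ ≤ ξ ∧ z = b ξ h}} := rfl
  rw [hdef]
  refine le_trans (infOm_le ⟨0, hζl.pos, rfl⟩) (supOm_le ?_ ?_)
  · exact ⟨b 0 hζl.pos, 0, hζl.pos, zero_le, rfl⟩
  · rintro z ⟨ξ', h', -, rfl⟩
    exact hc ξ' h'

theorem aLe_bound : ∀ (τ : Ty) {ζ : Ordinal} (_ : Order.IsSuccLimit ζ) (_ : ζ < ω₁)
    (b : ∀ ξ, ξ < ζ → El τ)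
    (_ : ∀ ξ ξ' (h : ξ < ζ) (h' : ξ' < ζ), ξ ≤ ξ' → Le τ (b ξ h) (b ξ' h'))
    (ξ : Ordinal) (h : ξ < ζ), Le τ (b ξ h) (limsupEl τ ζ b)
  | .base, _, hζl, hζ, b, hmono, ξ, h => base_bound hζl hζ b hmono ξ h
  | .arrow σ τ, _, hζl, hζ, b, hmono, ξ, h => by
      intro y
      rw [limsupEl_app]
      exact aLe_bound τ hζl hζ (fun ξ h => b ξ h y)
        (fun ξ ξ' h h' hle => hmono ξ ξ' h h' hle y) ξ h

theorem aLe_least : ∀ (τ : Ty) {ζ : Ordinal} (_ : Order.IsSuccLimit ζ)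
    (b : ∀ ξ, ξ < ζ → El τ) (c : El τ)
    (_ : ∀ ξ (h : ξ < ζ), Le τ (b ξ h) c), Le τ (limsupEl τ ζ b) c
  | .base, _, hζl, b, c, hc => base_least hζl b c hc
  | .arrow σ τ, _, hζl, b, c, hc => by
      intro y
      rw [limsupEl_app]
      exact aLe_least τ hζl (fun ξ h => b ξ h y) (c y) (fun ξ h => hc ξ h y)

theorem aHp_bound : ∀ (τ : Ty) {ζ : Ordinal} (_ : Order.IsSuccLimit ζ) (_ : ζ < ω₁)
    (b : ∀ ξ, ξ < ζ → El τ)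
    (_ : ∀ ξ ξ' (h : ξ < ζ) (h' : ξ' < ζ), ξ ≤ ξ' → HpLe τ (b ξ h) (b ξ' h'))
    (ξ : Ordinal) (h : ξ < ζ), HpLe τ (b ξ h) (limsupEl τ ζ b)
  | .base, _, hζl, hζ, b, hmono, ξ, h => base_bound hζl hζ b hmono ξ h
  | .arrow σ τ, _, hζl, hζ, b, hmono, ξ, h => by
      by_cases hst : σ = τ
      · subst hst
        refine hpLe_arrow_iff.2 fun y hy => ?_
        rw [limsupEl_app]
        exact aHp_bound σ hζl hζ (fun ξ h => b ξ h y)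
          (fun ξ ξ' h h' hle => hpLe_arrow_iff.1 (hmono ξ ξ' h h' hle) y hy) ξ h
      · rw [hpLe_arrow_ne_iff hst]
        exact aLe_bound (.arrow σ τ) hζl hζ b
          (fun ξ ξ' h h' hle => (hpLe_arrow_ne_iff hst).1 (hmono ξ ξ' h h' hle)) ξ h

theorem aHp_least : ∀ (τ : Ty) {ζ : Ordinal} (_ : Order.IsSuccLimit ζ)
    (b : ∀ ξ, ξ < ζ → El τ) (c : El τ)
    (_ : ∀ ξ (h : ξ < ζ), HpLe τ (b ξ h) c), HpLe τ (limsupEl τ ζ b) c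
  | .base, _, hζl, b, c, hc => base_least hζl b c hc
  | .arrow σ τ, _, hζl, b, c, hc => by
      by_cases hst : σ = τ
      · subst hst
        refine hpLe_arrow_iff.2 fun y hy => ?_
        rw [limsupEl_app]
        exact aHp_least σ hζl (fun ξ h => b ξ h y) (c y)
          (fun ξ h => hpLe_arrow_iff.1 (hc ξ h) y hy)
      · rw [hpLe_arrow_ne_iff hst]
        exact aLe_least (.arrow σ τ) hζl b c
          (fun ξ h => (hpLe_arrow_ne_iff hst).1 (hc ξ h))

theorem hp_limsup : ∀ (τ : Ty) {ζ : Ordinal} (_ : Order.IsSuccLimit ζ) (_ : ζ < ω₁)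
    (b : ∀ ξ, ξ < ζ → El τ) (_ : ∀ ξ (h : ξ < ζ), Hp τ (b ξ h))
    (_ : ∀ ξ ξ' (h : ξ < ζ) (h' : ξ' < ζ), ξ ≤ ξ' → HpLe τ (b ξ h) (b ξ' h')),
    Hp τ (limsupEl τ ζ b)
  | .base, _, _, _, _, _, _ => trivial
  | .arrow σ τ, _, hζl, hζ, b, hhp, hmono => by
      by_cases hst : σ = τ
      · subst hst
        refine hp_arrow_iff.2 ⟨fun y hy => ?_, fun y hy => ?_, fun y y' hy hy' hle => ?_⟩
        · rw [limsupEl_app]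
          exact hp_limsup σ hζl hζ (fun ξ h => b ξ h y)
            (fun ξ h => (hp_arrow_iff.1 (hhp ξ h)).1 y hy)
            (fun ξ ξ' h h' hle => hpLe_arrow_iff.1 (hmono ξ ξ' h h' hle) y hy)
        · rw [limsupEl_app]
          refine hpLe_trans σ ((hp_arrow_iff.1 (hhp 0 hζl.pos)).2.1 y hy) ?_
          exact aHp_bound σ hζl hζ (fun ξ h => b ξ h y)
            (fun ξ ξ' h h' hle => hpLe_arrow_iff.1 (hmono ξ ξ' h h' hle) y hy) 0 hζl.pos
        · rw [limsupEl_app, limsupEl_app]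
          refine aHp_least σ hζl (fun ξ h => b ξ h y) _ fun ξ h => ?_
          refine hpLe_trans σ ((hp_arrow_iff.1 (hhp ξ h)).2.2 y y' hy hy' hle) ?_
          exact aHp_bound σ hζl hζ (fun ξ h => b ξ h y')
            (fun ξ ξ' h h' hle => hpLe_arrow_iff.1 (hmono ξ ξ' h h' hle) y' hy') ξ h
      · exact hp_of_ne hst _

end Limsup
section IterLemmas

theorem Iter_zero (σ : Ty) (f : El σ → El σ) (x : El σ) : Iter σ 0 f x = x := by
  unfold Iter
  rw [Ordinal.limitRecOn_zero]

theorem Iter_succ (σ : Ty) (α : Ordinal) (f : El σ → El σ) (x : El σ) :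
    Iter σ (Order.succ α) f x = f (Iter σ α f x) := by
  unfold Iter
  rw [← Ordinal.add_one_eq_succ, Ordinal.limitRecOn_add_one]

theorem Iter_limit (σ : Ty) (μ : Ordinal) (hμ : Order.IsSuccLimit μ) (f : El σ → El σ) (x : El σ) :
    Iter σ μ f x = limsupEl σ μ (fun ξ _ => Iter σ ξ f x) := by
  unfold Iter
  rw [Ordinal.limitRecOn_limit _ _ _ _ hμ]

theorem iter_hp (τ : Ty) (f : El (.arrow τ τ)) (hf : Hp (.arrow τ τ) f) (α : Ordinal)
    (hα : α < ω₁) :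
    Hp (.arrow τ τ) (Iter τ α f) ∧
      ∀ β ≤ α, ∀ x, Hp τ x → HpLe τ (Iter τ β f x) (Iter τ α f x) := by
  have Hf := hp_arrow_iff.1 hf
  induction α using Ordinal.limitRecOn with
  | zero =>
    constructor
    · refine hp_arrow_iff.2 ⟨fun x hx => ?_, fun x hx => ?_, fun x y hx hy hxy => ?_⟩
      · rw [Iter_zero]; exact hx
      · rw [Iter_zero]; exact hpLe_refl τ x
      · rw [Iter_zero, Iter_zero]; exact hxy
    · intro β hβ x hx
      rw [nonpos_iff_eq_zero] at hβ
      subst hβ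
      exact hpLe_refl τ _
  | add_one α ih =>
    rw [Ordinal.add_one_eq_succ] at hα ⊢
    have hαω : α < ω₁ := (Order.le_succ α).trans_lt hα
    obtain ⟨ihp, imono⟩ := ih hαω
    have Hi := hp_arrow_iff.1 ihp
    constructor
    · refine hp_arrow_iff.2 ⟨fun x hx => ?_, fun x hx => ?_, fun x y hx hy hxy => ?_⟩
      · rw [Iter_succ]; exact Hf.1 _ (Hi.1 x hx)
      · rw [Iter_succ]
        exact hpLe_trans τ (Hi.2.1 x hx) (Hf.2.1 _ (Hi.1 x hx))
      · rw [Iter_succ, Iter_succ]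
        exact Hf.2.2 _ _ (Hi.1 x hx) (Hi.1 y hy) (Hi.2.2 x y hx hy hxy)
    · intro β hβ x hx
      rw [Iter_succ]
      rcases hβ.lt_or_eq with hlt | rfl
      · rw [Order.lt_succ_iff] at hlt
        exact hpLe_trans τ (imono β hlt x hx) (Hf.2.1 _ (Hi.1 x hx))
      · rw [Iter_succ]
        exact hpLe_refl τ _
  | limit μ hμ ih =>
    have hps : ∀ ξ (h : ξ < μ), Hp (.arrow τ τ) (Iter τ ξ f) :=
      fun ξ h => (ih ξ h (h.trans hα)).1
    have hmono : ∀ ξ ξ' (h : ξ < μ) (h' : ξ' < μ), ξ ≤ ξ' →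
        HpLe (.arrow τ τ) (Iter τ ξ f) (Iter τ ξ' f) :=
      fun ξ ξ' h h' hle => hpLe_arrow_iff.2 fun x hx => (ih ξ' h' (h'.trans hα)).2 ξ hle x hx
    have hfun : Iter τ μ f = limsupEl (.arrow τ τ) μ (fun ξ _ => Iter τ ξ f) :=
      funext fun x => by rw [Iter_limit _ _ hμ, limsupEl_app]
    constructor
    · rw [hfun]
      exact hp_limsup (.arrow τ τ) hμ hα _ hps hmono
    · intro β hβ x hx
      rcases hβ.lt_or_eq with hlt | rfl
      · rw [Iter_limit _ _ hμ]
        exact aHp_bound τ hμ hα (fun ξ _ => Iter τ ξ f x)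
          (fun ξ ξ' h h' hle => hpLe_arrow_iff.1 (hmono ξ ξ' h h' hle) x hx) β hlt
      · exact hpLe_refl τ _

end IterLemmas
section Main

theorem hp_congr {τ : Ty} {f : El (.arrow τ τ)} (hf : Hp (.arrow τ τ) f) {x y : El τ}
    (hx : Hp τ x) (hy : Hp τ y) (h : HpEq τ x y) : HpEq τ (f x) (f y) :=
  ⟨(hp_arrow_iff.1 hf).2.2 x y hx hy h.1, (hp_arrow_iff.1 hf).2.2 y x hy hx h.2⟩

theorem iter_add (τ : Ty) (f : El (.arrow τ τ)) (hf : Hp (.arrow τ τ) f) (x : El τ)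
    (hx : Hp τ x) (β : Ordinal) (hβ : β < ω₁) :
    ∀ γ, γ < ω₁ → HpEq τ (Iter τ (β + γ) f x) (Iter τ γ f (Iter τ β f x)) := by
  intro γ
  have hxβ : Hp τ (Iter τ β f x) := (hp_arrow_iff.1 (iter_hp τ f hf β hβ).1).1 x hx
  induction γ using Ordinal.limitRecOn with
  | zero => intro _; rw [add_zero, Iter_zero]; exact hpEq_refl τ _
  | add_one γ ih =>
    intro hγ
    rw [Ordinal.add_one_eq_succ] at hγ ⊢
    have hγω : γ < ω₁ := (Order.le_succ γ).trans_lt hγ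
    rw [Ordinal.add_succ, Iter_succ, Iter_succ]
    refine hp_congr hf ?_ ?_ (ih hγω)
    · exact (hp_arrow_iff.1 (iter_hp τ f hf (β + γ) (add_lt_omega1 hβ hγω)).1).1 x hx
    · exact (hp_arrow_iff.1 (iter_hp τ f hf γ hγω).1).1 _ hxβ
  | limit μ hμ ih =>
    intro hμω
    have hβμ : β + μ < ω₁ := add_lt_omega1 hβ hμω
    have hliml : Order.IsSuccLimit (β + μ) := Ordinal.isSuccLimit_add β hμ
    rw [Iter_limit _ _ hliml, Iter_limit _ _ hμ]
    have mono1 : ∀ ξ ξ' (h : ξ < β + μ) (h' : ξ' < β + μ), ξ ≤ ξ' →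
        HpLe τ (Iter τ ξ f x) (Iter τ ξ' f x) :=
      fun ξ ξ' h h' hle => (iter_hp τ f hf ξ' (h'.trans hβμ)).2 ξ hle x hx
    have mono2 : ∀ η η' (h : η < μ) (h' : η' < μ), η ≤ η' →
        HpLe τ (Iter τ η f (Iter τ β f x)) (Iter τ η' f (Iter τ β f x)) :=
      fun η η' h h' hle => (iter_hp τ f hf η' (h'.trans hμω)).2 η hle _ hxβ
    constructor
    · refine aHp_least τ hliml _ _ fun ξ h => ?_
      rcases le_or_gt β ξ with hbx | hxb
      · have hη : ξ - β < μ := Ordinal.sub_lt_of_lt_add h hμ.pos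
        have heq : β + (ξ - β) = ξ := Ordinal.add_sub_cancel_of_le hbx
        have h1 := (ih (ξ - β) hη (hη.trans hμω)).1
        rw [heq] at h1
        exact hpLe_trans τ h1
          (aHp_bound τ hμ hμω (fun η _ => Iter τ η f (Iter τ β f x)) mono2 (ξ - β) hη)
      · have h1 : HpLe τ (Iter τ ξ f x) (Iter τ β f x) :=
          (iter_hp τ f hf β hβ).2 ξ hxb.le x hx
        have h2 : HpLe τ (Iter τ β f x) (Iter τ 0 f (Iter τ β f x)) := by
          rw [Iter_zero]; exact hpLe_refl τ _
        exact hpLe_trans τ h1 (hpLe_trans τ h2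
          (aHp_bound τ hμ hμω (fun η _ => Iter τ η f (Iter τ β f x)) mono2 0 hμ.pos))
    · refine aHp_least τ hμ _ _ fun η hη => ?_
      have h1 := (ih η hη (hη.trans hμω)).2
      exact hpLe_trans τ h1 (aHp_bound τ hliml hβμ (fun ξ _ => Iter τ ξ f x) mono1 (β + η)
        ((add_lt_add_iff_left β).2 hη))

theorem iter_id (τ : Ty) (g : El (.arrow τ τ)) (hg : Hp (.arrow τ τ) g)
    (hgid : ∀ y, g y = y) (x : El τ) (hx : Hp τ x) :
    ∀ α, α < ω₁ → HpEq τ (Iter τ α g x) x := by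
  intro α
  induction α using Ordinal.limitRecOn with
  | zero => intro _; rw [Iter_zero]; exact hpEq_refl τ x
  | add_one α ih =>
    intro hα
    rw [Ordinal.add_one_eq_succ] at hα ⊢
    rw [Iter_succ, hgid]
    exact ih ((Order.le_succ α).trans_lt hα)
  | limit μ hμ ih =>
    intro hμω
    rw [Iter_limit _ _ hμ]
    constructor
    · exact aHp_least τ hμ _ x fun ξ h => (ih ξ h (h.trans hμω)).1
    · have h0 : HpLe τ x (Iter τ 0 g x) := by rw [Iter_zero]; exact hpLe_refl τ x
      exact hpLe_trans τ h0 (aHp_bound τ hμ hμω _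
        (fun ξ ξ' h h' hle => (iter_hp τ g hg ξ' (h'.trans hμω)).2 ξ hle x hx) 0 hμ.pos)

end Main


/-- For h.p. `f ∈ Ω_{τ→τ}` and h.p. `x ∈ Ω_τ`, and countable ordinals
`α`, `γ`: `Iter_α^τ (Iter_γ^τ f) x =hp Iter_{γ·α}^τ f x`. -/
theorem iter_iter_hpEq_iter_mul (τ : Ty) (f : El (.arrow τ τ)) (hf : Hp (.arrow τ τ) f)
    (x : El τ) (hx : Hp τ x) (α γ : Ordinal) (hα : α < ω₁) (hγ : γ < ω₁) :
    HpEq τ (Iter τ α (Iter τ γ f) x) (Iter τ (γ * α) f x) := by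
  by_cases hγ0 : γ = 0
  · subst hγ0
    rw [zero_mul, Iter_zero]
    exact iter_id τ (Iter τ 0 f) (iter_hp τ f hf 0 omega1_pos).1 (Iter_zero τ f) x hx α hα
  · have hγpos : 0 < γ := pos_iff_ne_zero.2 hγ0
    have hg : Hp (.arrow τ τ) (Iter τ γ f) := (iter_hp τ f hf γ hγ).1
    revert hα
    induction α using Ordinal.limitRecOn with
    | zero => intro _; rw [mul_zero, Iter_zero, Iter_zero]; exact hpEq_refl τ x
    | add_one α ih =>
      intro hα
      rw [Ordinal.add_one_eq_succ] at hα ⊢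
      have hαω : α < ω₁ := (Order.le_succ α).trans_lt hα
      rw [Iter_succ, Ordinal.mul_succ]
      have hp1 : Hp τ (Iter τ α (Iter τ γ f) x) :=
        (hp_arrow_iff.1 (iter_hp τ (Iter τ γ f) hg α hαω).1).1 x hx
      have hp2 : Hp τ (Iter τ (γ * α) f x) :=
        (hp_arrow_iff.1 (iter_hp τ f hf (γ * α) (mul_lt_omega1 hγ hαω)).1).1 x hx
      refine hpEq_trans (hp_congr hg hp1 hp2 (ih hαω)) ?_
      exact hpEq_symm (iter_add τ f hf x hx (γ * α) (mul_lt_omega1 hγ hαω) γ hγ)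
    | limit μ hμ ih =>
      intro hμω
      have hlim2 : Order.IsSuccLimit (γ * μ) := Ordinal.isSuccLimit_mul_right hγpos hμ
      have hγμ : γ * μ < ω₁ := mul_lt_omega1 hγ hμω
      rw [Iter_limit _ _ hμ, Iter_limit _ _ hlim2]
      have mono1 : ∀ ξ ξ' (h : ξ < μ) (h' : ξ' < μ), ξ ≤ ξ' →
          HpLe τ (Iter τ ξ (Iter τ γ f) x) (Iter τ ξ' (Iter τ γ f) x) :=
        fun ξ ξ' h h' hle => (iter_hp τ _ hg ξ' (h'.trans hμω)).2 ξ hle x hx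
      have mono2 : ∀ ξ ξ' (h : ξ < γ * μ) (h' : ξ' < γ * μ), ξ ≤ ξ' →
          HpLe τ (Iter τ ξ f x) (Iter τ ξ' f x) :=
        fun ξ ξ' h h' hle => (iter_hp τ f hf ξ' (h'.trans hγμ)).2 ξ hle x hx
      constructor
      · refine aHp_least τ hμ _ _ fun η hη => ?_
        have h1 := (ih η hη (hη.trans hμω)).1
        have hγη : γ * η < γ * μ := mul_lt_mul_of_pos_left hη hγpos
        exact hpLe_trans τ h1 (aHp_bound τ hlim2 hγμ (fun ξ _ => Iter τ ξ f x) mono2 (γ * η) hγη)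
      · refine aHp_least τ hlim2 _ _ fun ξ hξ => ?_
        obtain ⟨η, hη, hξη⟩ := (Ordinal.lt_mul_iff_of_isSuccLimit hμ).1 hξ
        have h1 : HpLe τ (Iter τ ξ f x) (Iter τ (γ * η) f x) :=
          (iter_hp τ f hf (γ * η) (mul_lt_omega1 hγ (hη.trans hμω)) ).2 ξ hξη.le x hx
        have h2 := (ih η hη (hη.trans hμω)).2
        exact hpLe_trans τ h1 (hpLe_trans τ h2
          (aHp_bound τ hμ hμω (fun η _ => Iter τ η (Iter τ γ f) x) mono1 η hη))


end IterOrd
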